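/- Let u₁(ξ,τ) = (5/2)√((2+ξ)² − τ²) − (4 + 2ξ) on the domain {(ξ,τ) : ξ > −2, |τ| < 2+ξ} (the explicit solution of the Cauchy problem of Example 4.1 in spacetime coordinates). Then for every fixed ξ > 0, the partial derivative ∂u₁/∂τ(ξ,τ) tends to −∞ as τ increases to ξ + 2. Hence this wave map, although it arises from real-analytic initial data at τ = 0, blows up in finite time: it admits no C¹ extension past the curve τ = ξ + 2. -/

import Mathlib

open Filter

noncomputable def u1 (ξ τ : ℝ) : ℝ :=
  (5 / 2) * Real.sqrt ((2 + ξ) ^ 2 - τ ^ 2) - (4 + 2 * ξ)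

lemma u1_deriv (ξ τ : ℝ) (h1 : -(2+ξ) < τ) (h2 : τ < 2+ξ) :
    deriv (fun t => u1 ξ t) τ = -((5/2) * τ) / Real.sqrt ((2+ξ)^2 - τ^2) := by
  have hpos : 0 < (2+ξ)^2 - τ^2 := by nlinarith
  have hs : HasDerivAt (fun t : ℝ => (2+ξ)^2 - t^2) (-(2*τ)) τ := by
    simpa using ((hasDerivAt_pow 2 τ).const_sub ((2+ξ)^2))
  have hsqrt : HasDerivAt (fun t => Real.sqrt ((2+ξ)^2 - t^2))
      (1 / (2 * Real.sqrt ((2+ξ)^2 - τ^2)) * (-(2*τ))) τ :=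
    (Real.hasDerivAt_sqrt hpos.ne').comp τ hs
  have h : HasDerivAt (fun t => u1 ξ t)
      ((5/2) * (1 / (2 * Real.sqrt ((2+ξ)^2 - τ^2)) * (-(2*τ)))) τ := by
    unfold u1
    exact (hsqrt.const_mul (5/2)).sub_const _
  rw [h.deriv]
  have hsne : Real.sqrt ((2+ξ)^2 - τ^2) ≠ 0 := (Real.sqrt_pos.2 hpos).ne'
  field_simp

lemma u1_tendsto (ξ : ℝ) (hξ : 0 < ξ) :
    Tendsto (fun τ => deriv (fun t => u1 ξ t) τ) (nhdsWithin (ξ + 2) (Set.Iio (ξ + 2)))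
      atBot := by
  set a := ξ + 2 with ha
  have haa : (2:ℝ) + ξ = a := by ring
  have ha2 : (2:ℝ) < a := by simp [ha]; linarith
  have hF : nhdsWithin a (Set.Iio a) ≤ nhds a := nhdsWithin_le_nhds
  -- eventually τ ∈ Ioo (-a) a
  have hev : ∀ᶠ τ in nhdsWithin a (Set.Iio a), -a < τ ∧ τ < a := by
    have h1 : ∀ᶠ τ in nhdsWithin a (Set.Iio a), -a < τ :=
      hF (eventually_gt_nhds (by linarith))
    have h2 : ∀ᶠ τ in nhdsWithin a (Set.Iio a), τ < a :=
      eventually_mem_nhdsWithin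
    exact h1.and h2
  -- the explicit derivative tends to atBot
  have hsqrt0 : Tendsto (fun τ => Real.sqrt ((2+ξ)^2 - τ^2))
      (nhdsWithin a (Set.Iio a)) (nhdsWithin 0 (Set.Ioi 0)) := by
    rw [tendsto_nhdsWithin_iff]
    constructor
    · have : Tendsto (fun τ : ℝ => Real.sqrt ((2+ξ)^2 - τ^2)) (nhds a)
          (nhds (Real.sqrt ((2+ξ)^2 - a^2))) := by
        apply Tendsto.comp (Real.continuous_sqrt.tendsto _)
        exact (tendsto_const_nhds.sub ((continuous_pow 2).tendsto a))
      have h0 : Real.sqrt ((2+ξ)^2 - a^2) = 0 := by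
        rw [haa]; simp
      rw [h0] at this
      exact this.mono_left hF
    · filter_upwards [hev] with τ hτ
      have : 0 < (2+ξ)^2 - τ^2 := by rw [haa]; nlinarith [hτ.1, hτ.2]
      exact Real.sqrt_pos.2 this
  have hinv : Tendsto (fun τ => (Real.sqrt ((2+ξ)^2 - τ^2))⁻¹)
      (nhdsWithin a (Set.Iio a)) atTop :=
    tendsto_inv_nhdsGT_zero.comp hsqrt0
  have hnum : Tendsto (fun τ : ℝ => (5/2) * τ) (nhdsWithin a (Set.Iio a))
      (nhds ((5/2) * a)) :=
    (tendsto_id.const_mul (5/2)).mono_left hF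
  have htop : Tendsto (fun τ => (5/2) * τ * (Real.sqrt ((2+ξ)^2 - τ^2))⁻¹)
      (nhdsWithin a (Set.Iio a)) atTop :=
    hnum.pos_mul_atTop (by linarith) hinv
  have hbot : Tendsto (fun τ => -((5/2) * τ / Real.sqrt ((2+ξ)^2 - τ^2)))
      (nhdsWithin a (Set.Iio a)) atBot := by
    have h := tendsto_neg_atTop_atBot.comp htop
    refine h.congr fun τ => ?_
    simp [Function.comp, div_eq_mul_inv]
  refine hbot.congr' ?_
  filter_upwards [hev] with τ hτ
  rw [u1_deriv ξ τ (by linarith [hτ.1]) (by linarith [hτ.2])]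
  ring

/-- for every fixed `ξ > 0`, the derivative `∂u₁/∂τ` tends to `−∞` as
`τ` increases to `ξ + 2`; hence the wave map of Example 4.1, though arising from
real-analytic initial data, blows up in finite time and admits no C¹ extension in `τ`
past `τ = ξ + 2`. -/
theorem example41_blowup (ξ : ℝ) (hξ : 0 < ξ) :
    Tendsto (fun τ => deriv (fun t => u1 ξ t) τ) (nhdsWithin (ξ + 2) (Set.Iio (ξ + 2)))
      atBot ∧
    ¬ ∃ (g : ℝ → ℝ) (ε : ℝ), 0 < ε ∧
        ContDiffOn ℝ 1 g (Set.Ioo (ξ + 2 - ε) (ξ + 2 + ε)) ∧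
        ∀ τ ∈ Set.Ioo (ξ + 2 - ε) (ξ + 2), g τ = u1 ξ τ := by
  refine ⟨u1_tendsto ξ hξ, ?_⟩
  rintro ⟨g, ε, hε, hg, heq⟩
  set a := ξ + 2 with ha
  have hsopen : IsOpen (Set.Ioo (a - ε) (a + ε)) := isOpen_Ioo
  have hamem : a ∈ Set.Ioo (a - ε) (a + ε) := by constructor <;> linarith
  have hcont : ContinuousOn (deriv g) (Set.Ioo (a - ε) (a + ε)) :=
    hg.continuousOn_deriv_of_isOpen hsopen le_rfl
  have hnhds : Set.Ioo (a - ε) (a + ε) ∈ nhds a := hsopen.mem_nhds hamem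
  have htend : Tendsto (deriv g) (nhds a) (nhds (deriv g a)) := by
    have := (hcont a hamem).tendsto
    rwa [nhdsWithin_eq_nhds.2 hnhds] at this
  have htendF : Tendsto (deriv g) (nhdsWithin a (Set.Iio a)) (nhds (deriv g a)) :=
    htend.mono_left nhdsWithin_le_nhds
  -- deriv g = deriv u1 eventually on the left filter
  have heqd : ∀ᶠ τ in nhdsWithin a (Set.Iio a), deriv g τ = deriv (fun t => u1 ξ t) τ := by
    have h1 : ∀ᶠ τ in nhdsWithin a (Set.Iio a), τ ∈ Set.Ioo (a - ε) a := by
      have hga : ∀ᶠ τ in nhdsWithin a (Set.Iio a), a - ε < τ :=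
        nhdsWithin_le_nhds (eventually_gt_nhds (by linarith))
      have hlt : ∀ᶠ τ in nhdsWithin a (Set.Iio a), τ < a := eventually_mem_nhdsWithin
      filter_upwards [hga, hlt] with τ h1 h2 using ⟨h1, h2⟩
    filter_upwards [h1] with τ hτ
    have hopen : IsOpen (Set.Ioo (a - ε) a) := isOpen_Ioo
    have : g =ᶠ[nhds τ] fun t => u1 ξ t := by
      filter_upwards [hopen.mem_nhds hτ] with t ht using heq t ⟨ht.1, by linarith [ht.2]⟩
    exact this.deriv_eq
  have hbot : Tendsto (deriv g) (nhdsWithin a (Set.Iio a)) atBot :=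
    (u1_tendsto ξ hξ).congr' (heqd.mono fun _ h => h.symm)
  exact not_tendsto_atBot_of_tendsto_nhds htendF hbot
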